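/- Let A be an N×N integer matrix, regarded as a ℚ-linear endomorphism of ℚᴺ. Let ER := ⋂ₙ Aⁿ(ℚᴺ) be the eventual range of A (equal to A^N(ℚᴺ)), on which A restricts to a linear automorphism. Set ER_ℤ := {v ∈ ER : Aⁿ v ∈ ℤᴺ for some n ∈ ℕ} and Σ := ER ∩ ℤᴺ. Let V ⊆ ER be a ℚ-subspace with A(V) = V, set V_ℤ := V ∩ ER_ℤ, let W := ER/V with quotient map π_W, let Γ := π_W(Σ), and let Ā : W → W be the automorphism induced by A. If det(Ā) = ±1, then there exists an additive group homomorphism s : ER_ℤ → V_ℤ with s(v) = v for all v ∈ V_ℤ; in particular V_ℤ is a direct summand of the abelian group ER_ℤ. -/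

import Mathlib

private lemma stmt9_denom {N : ℕ} (v : Fin N → ℚ) :
    ∃ d : ℕ, 0 < d ∧ ∀ i, ∃ z : ℤ, (d : ℚ) * v i = (z : ℚ) := by
  refine ⟨∏ i, (v i).den, Finset.prod_pos (fun i _ => (v i).pos), fun i => ?_⟩
  obtain ⟨c, hc⟩ : (v i).den ∣ ∏ j, (v j).den := Finset.dvd_prod_of_mem _ (Finset.mem_univ i)
  refine ⟨(v i).num * c, ?_⟩
  have hden : ((v i).den : ℚ) ≠ 0 := by exact_mod_cast (v i).den_ne_zero
  have h0 : v i = ((v i).num : ℚ) / ((v i).den : ℚ) := (Rat.num_div_den (v i)).symm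
  rw [eq_div_iff hden] at h0
  rw [hc]
  push_cast
  linear_combination (c : ℚ) * h0

/-- Let `A` be an `N×N` integer matrix, acting `ℚ`-linearly on `ℚᴺ` as `φ`.  Let
`ER = ⋂ₙ Aⁿ(ℚᴺ)` be the eventual range, `ER_ℤ = {v ∈ ER : Aⁿ v ∈ ℤᴺ for some n}`,
`V ⊆ ER` a `ℚ`-subspace with `A(V) = V`, `V_ℤ = V ∩ ER_ℤ`, `W = ER/V` (presented here by a
linear map `p` with `p(ER) = W` and `ker p ∩ ER = V`), and `Ā : W → W` the automorphism
induced by `A`.  If `det(Ā) = ±1`, then there is an additive group homomorphism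
`s : ER_ℤ → V_ℤ` with `s(v) = v` for all `v ∈ V_ℤ`; in particular `V_ℤ` is a direct summand
of `ER_ℤ`. -/
theorem stmt9 (N : ℕ) (W : Type*) [AddCommGroup W] [Module ℚ W] [FiniteDimensional ℚ W]
    (A : Matrix (Fin N) (Fin N) ℤ)
    (φ : (Fin N → ℚ) →ₗ[ℚ] (Fin N → ℚ))
    (hφ : φ = Matrix.toLin' (A.map ((↑) : ℤ → ℚ)))
    (ER : Submodule ℚ (Fin N → ℚ))
    (hER : ER = ⨅ n : ℕ, LinearMap.range (φ ^ n))
    (V : Submodule ℚ (Fin N → ℚ)) (hVER : V ≤ ER)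
    (hAV : Submodule.map φ V = V)
    (ERZ VZ : AddSubgroup (Fin N → ℚ))
    (hERZ : (ERZ : Set (Fin N → ℚ)) =
      {v | v ∈ ER ∧ ∃ n : ℕ, ∀ i, ∃ z : ℤ, (φ ^ n) v i = (z : ℚ)})
    (hVZ : (VZ : Set (Fin N → ℚ)) = (V : Set (Fin N → ℚ)) ∩ (ERZ : Set (Fin N → ℚ)))
    (p : (Fin N → ℚ) →ₗ[ℚ] W)
    (hp : Submodule.map p ER = ⊤)
    (hker : LinearMap.ker p ⊓ ER = V)
    (Abar : W →ₗ[ℚ] W)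
    (hAbar : ∀ v ∈ ER, Abar (p v) = p (φ v))
    (hdet : LinearMap.det Abar = 1 ∨ LinearMap.det Abar = -1) :
    ∃ s : ERZ →+ (Fin N → ℚ),
      (∀ x : ERZ, s x ∈ VZ) ∧ ∀ x : ERZ, (x : Fin N → ℚ) ∈ VZ → s x = (x : Fin N → ℚ) := by
  classical
  have hERZmem : ∀ v : Fin N → ℚ,
      v ∈ ERZ ↔ v ∈ ER ∧ ∃ n : ℕ, ∀ i, ∃ z : ℤ, (φ ^ n) v i = (z : ℚ) :=
    fun v => Set.ext_iff.mp hERZ v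
  have hVZmem : ∀ v : Fin N → ℚ, v ∈ VZ ↔ v ∈ V ∧ v ∈ ERZ :=
    fun v => Set.ext_iff.mp hVZ v
  have hERZsub : ∀ v ∈ ERZ, v ∈ ER := fun v hv => ((hERZmem v).1 hv).1
  -- φ preserves ER
  have hφER : ∀ v ∈ ER, φ v ∈ ER := by
    intro v hv
    rw [hER, Submodule.mem_iInf] at hv ⊢
    intro n
    obtain ⟨w, hw⟩ := hv n
    refine ⟨φ w, ?_⟩
    have : (φ ^ n) (φ w) = φ ((φ ^ n) w) := by
      rw [← Module.End.mul_apply, ← Module.End.mul_apply, ← pow_succ, ← pow_succ']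
    rw [this, hw]
  -- φ preserves integrality
  have hφint : ∀ v : Fin N → ℚ, (∀ i, ∃ z : ℤ, v i = (z : ℚ)) →
      ∀ i, ∃ z : ℤ, φ v i = (z : ℚ) := by
    intro v hv i
    choose z hz using hv
    refine ⟨∑ j, A i j * z j, ?_⟩
    rw [hφ, Matrix.toLin'_apply]
    simp only [Matrix.mulVec, dotProduct, Matrix.map_apply, hz]
    push_cast
    rfl
  -- the integer lattice
  set g : (Fin N → ℤ) →ₗ[ℤ] (Fin N → ℚ) :=
    LinearMap.pi (fun i => (Int.castAddHom ℚ).toIntLinearMap.comp (LinearMap.proj i)) with hg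
  have hrange : ∀ v : Fin N → ℚ, v ∈ LinearMap.range g ↔ ∀ i, ∃ z : ℤ, v i = (z : ℚ) := by
    intro v
    constructor
    · rintro ⟨x, rfl⟩ i; exact ⟨x i, rfl⟩
    · intro h
      choose z hz using h
      exact ⟨z, funext fun i => (hz i).symm⟩
  set Sig : Submodule ℤ (Fin N → ℚ) := ER.restrictScalars ℤ ⊓ LinearMap.range g with hSig
  have hSigmem : ∀ v : Fin N → ℚ, v ∈ Sig ↔ v ∈ ER ∧ ∀ i, ∃ z : ℤ, v i = (z : ℚ) := by
    intro v
    rw [hSig, Submodule.mem_inf, Submodule.restrictScalars_mem, hrange]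
  have hφSig : ∀ v ∈ Sig, φ v ∈ Sig := by
    intro v hv
    rw [hSigmem] at hv ⊢
    exact ⟨hφER v hv.1, hφint v hv.2⟩
  set pZ : (Fin N → ℚ) →ₗ[ℤ] W := p.restrictScalars ℤ with hpZ
  set Γ : Submodule ℤ W := Submodule.map pZ Sig with hΓ
  have hAbarΓ : ∀ x ∈ Γ, Abar x ∈ Γ := by
    rintro _ ⟨v, hv, rfl⟩
    refine ⟨φ v, hφSig v hv, ?_⟩
    exact (hAbar v ((hSigmem v).1 hv).1).symm
  -- Γ is finitely generated
  have hSigFG : Sig.FG := by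
    have h1 : (Submodule.comap g (ER.restrictScalars ℤ)).FG := IsNoetherian.noetherian _
    have h2 : Submodule.map g (Submodule.comap g (ER.restrictScalars ℤ)) = Sig := by
      rw [Submodule.map_comap_eq, hSig, inf_comm]
    exact h2 ▸ h1.map g
  have hΓFG : Γ.FG := hSigFG.map pZ
  haveI : Module.Finite ℤ Γ := Module.Finite.iff_fg.mpr hΓFG
  haveI : NoZeroSMulDivisors ℤ W := by
    haveI := IsAddTorsionFree.of_module_rat (M := W); exact IsAddTorsionFree.to_noZeroSMulDivisors_int
  haveI : Module.Free ℤ Γ := Module.free_of_finite_type_torsion_free'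
  set ι := Module.Free.ChooseBasisIndex ℤ Γ with hι
  set bZ : Module.Basis ι ℤ Γ := Module.Free.chooseBasis ℤ Γ with hbZ
  set wv : ι → W := fun i => (bZ i : W) with hwv
  have hindZ : LinearIndependent ℤ wv :=
    bZ.linearIndependent.map' Γ.subtype (Submodule.ker_subtype Γ)
  have hindQ : LinearIndependent ℚ wv := (LinearIndependent.iff_fractionRing ℤ ℚ).1 hindZ
  -- Γ spans W over ℚ
  have hspanΓ : Submodule.span ℚ (Γ : Set W) = ⊤ := by
    rw [eq_top_iff]
    intro w _
    obtain ⟨v, hv, rfl⟩ :=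
      (Submodule.mem_map).1 (by rw [hp]; exact Submodule.mem_top : w ∈ Submodule.map p ER)
    obtain ⟨d, hd, hdz⟩ := stmt9_denom v
    have hmem : (d : ℚ) • v ∈ Sig := by
      rw [hSigmem]
      refine ⟨Submodule.smul_mem _ _ hv, fun i => ?_⟩
      simpa using hdz i
    have hpd : p ((d : ℚ) • v) ∈ (Γ : Set W) := ⟨(d : ℚ) • v, hmem, rfl⟩
    have hd0 : (d : ℚ) ≠ 0 := by exact_mod_cast hd.ne'
    have : p v = (d : ℚ)⁻¹ • p ((d : ℚ) • v) := by
      rw [map_smul, smul_smul, inv_mul_cancel₀ hd0, one_smul]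
    rw [this]
    exact Submodule.smul_mem _ _ (Submodule.subset_span hpd)
  have hΓspan : Γ = Submodule.span ℤ (Set.range wv) := by
    have := congrArg (Submodule.map Γ.subtype) bZ.span_eq
    rw [Submodule.map_span, Submodule.map_subtype_top] at this
    rw [← this]
    congr 1
    ext x
    simp [hwv]
  have hspan : ⊤ ≤ Submodule.span ℚ (Set.range wv) := by
    rw [← hspanΓ]
    refine Submodule.span_le.2 ?_
    intro x hx
    rw [hΓspan] at hx
    have : Submodule.span ℤ (Set.range wv) ≤
        (Submodule.span ℚ (Set.range wv)).restrictScalars ℤ :=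
      Submodule.span_le.2 Submodule.subset_span
    exact this hx
  set basW : Module.Basis ι ℚ W := Module.Basis.mk hindQ hspan with hbasW
  -- the restricted map and its matrix
  set fZ : Γ →ₗ[ℤ] Γ := (Abar.restrictScalars ℤ).restrict hAbarΓ with hfZ
  set M : Matrix ι ι ℤ := LinearMap.toMatrix bZ bZ fZ with hM
  have hMapp : ∀ j, Abar (wv j) = ∑ i, (M i j : ℚ) • wv i := by
    intro j
    have h1 : fZ (bZ j) = ∑ i, M i j • bZ i := by
      conv_lhs => rw [← bZ.sum_repr (fZ (bZ j))]
      refine Finset.sum_congr rfl fun i _ => ?_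
      rw [hM, LinearMap.toMatrix_apply]
    have h2 : Abar (wv j) = ((fZ (bZ j) : Γ) : W) := rfl
    rw [h2, h1, AddSubmonoidClass.coe_finset_sum]
    refine Finset.sum_congr rfl fun i _ => ?_
    rw [Int.cast_smul_eq_zsmul]
    rfl
  have hMat : LinearMap.toMatrix basW basW Abar = M.map ((↑) : ℤ → ℚ) := by
    ext i j
    rw [LinearMap.toMatrix_apply, show basW j = wv j from Module.Basis.mk_apply hindQ hspan j, hMapp j]
    have : ∀ k, (M k j : ℚ) • wv k = (M k j : ℚ) • basW k := by
      intro k; rw [show basW k = wv k from Module.Basis.mk_apply hindQ hspan k]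
    simp_rw [this]
    rw [show (basW.repr (∑ k, (fun k => (M k j : ℚ)) k • basW k)) i
        = (fun k => (M k j : ℚ)) i from congrFun (basW.repr_sum_self _) i]
    simp [Matrix.map_apply]
  have hdetM : (M.det : ℚ) = LinearMap.det Abar := by
    rw [← LinearMap.det_toMatrix basW, hMat,
      show M.map ((↑) : ℤ → ℚ) = (Int.castRingHom ℚ).mapMatrix M from rfl,
      ← RingHom.map_det]
    rfl
  have hdetMZ : M.det = 1 ∨ M.det = -1 := by
    rcases hdet with h | h
    · left; exact_mod_cast hdetM.trans h
    · right; exact_mod_cast hdetM.trans h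
  have hMunit : IsUnit M.det := by
    rcases hdetMZ with h | h <;> rw [h]
    · exact isUnit_one
    · exact isUnit_one.neg
  have hMunit' : IsUnit (LinearMap.toMatrix bZ bZ fZ).det := by rwa [← hM]
  -- surjectivity of Abar on Γ
  have hsurj : ∀ y ∈ Γ, ∃ x ∈ Γ, Abar x = y := by
    intro y hy
    set e : Γ ≃ₗ[ℤ] Γ := LinearEquiv.ofIsUnitDet hMunit' with he
    refine ⟨(e.symm ⟨y, hy⟩ : Γ), (e.symm ⟨y, hy⟩).2, ?_⟩
    have h1 : e (e.symm ⟨y, hy⟩) = ⟨y, hy⟩ := e.apply_symm_apply _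
    have h2 : (e (e.symm ⟨y, hy⟩) : W) = Abar ((e.symm ⟨y, hy⟩ : Γ) : W) := rfl
    rw [h1] at h2
    exact h2.symm
  -- injectivity of Abar on W
  have hdet0 : LinearMap.det Abar ≠ 0 := by
    rcases hdet with h | h <;> rw [h] <;> norm_num
  have hinj : Function.Injective Abar := by
    intro a b hab
    exact (LinearMap.equivOfDetNeZero Abar hdet0).injective hab
  -- p maps ERZ into Γ
  have hkey : ∀ n : ℕ, ∀ v, v ∈ ER → (∀ i, ∃ z : ℤ, (φ ^ n) v i = (z : ℚ)) → p v ∈ Γ := by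
    intro n
    induction n with
    | zero =>
      intro v hv h
      exact ⟨v, (hSigmem v).2 ⟨hv, by simpa using h⟩, rfl⟩
    | succ n ih =>
      intro v hv h
      have h' : ∀ i, ∃ z : ℤ, (φ ^ n) (φ v) i = (z : ℚ) := by
        intro i
        have hc : (φ ^ (n + 1)) v = (φ ^ n) (φ v) := by
          rw [← Module.End.mul_apply, ← pow_succ]
        rw [← hc]; exact h i
      have hpφ : Abar (p v) ∈ Γ := by
        rw [hAbar v hv]
        exact ih (φ v) (hφER v hv) h'
      obtain ⟨x, hxΓ, hx⟩ := hsurj _ hpφ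
      rwa [← hinj hx]
  -- assemble the retraction
  set ERZM : Submodule ℤ (Fin N → ℚ) := AddSubgroup.toIntSubmodule ERZ with hERZM
  set q : ERZM →ₗ[ℤ] W := pZ.domRestrict ERZM with hq
  have hQle : LinearMap.range q ≤ Γ := by
    rintro _ ⟨x, rfl⟩
    obtain ⟨hx1, n, hn⟩ := (hERZmem x.1).1 x.2
    exact hkey n x.1 hx1 hn
  obtain ⟨m, c0⟩ := Submodule.basisOfPid bZ ((LinearMap.range q).comap Γ.subtype)
  set eQ := Submodule.comapSubtypeEquivOfLe hQle with heQ
  set cQ : Module.Basis (Fin m) ℤ (LinearMap.range q) := c0.map eQ with hcQ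
  have hsec : ∀ i : Fin m, ∃ x : ERZM, q x = (cQ i : W) := fun i => (cQ i).2
  choose sec hsecval using hsec
  set t0 : LinearMap.range q →ₗ[ℤ] ERZM := cQ.constr ℤ sec with ht0
  have hqt : ∀ y : LinearMap.range q, q (t0 y) = (y : W) := by
    have h1 : q ∘ₗ t0 = (LinearMap.range q).subtype := by
      refine cQ.ext fun i => ?_
      simp [ht0, Module.Basis.constr_basis, hsecval]
    intro y
    exact LinearMap.ext_iff.1 h1 y
  set toM : ↥ERZ → ↥ERZM := fun x => ⟨x.1, x.2⟩ with htoM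
  set F : ERZM →ₗ[ℤ] (Fin N → ℚ) :=
    ERZM.subtype - ERZM.subtype ∘ₗ (t0 ∘ₗ q.rangeRestrict) with hF
  refine ⟨AddMonoidHom.mk' (fun x => F (toM x)) ?_, ?_, ?_⟩
  · intro a b
    show F (toM (a + b)) = F (toM a) + F (toM b)
    rw [show toM (a + b) = toM a + toM b from rfl, map_add]
  · intro x
    have hmem1 : (t0 (q.rangeRestrict (toM x)) : Fin N → ℚ) ∈ ERZ :=
      (t0 (q.rangeRestrict (toM x))).2
    have hFx : F (toM x) = (x : Fin N → ℚ) - (t0 (q.rangeRestrict (toM x)) : Fin N → ℚ) := rfl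
    have hERZF : F (toM x) ∈ ERZ := by
      rw [hFx]; exact sub_mem x.2 hmem1
    have hpF : p (F (toM x)) = 0 := by
      have h1 : p ((t0 (q.rangeRestrict (toM x)) : ERZM) : Fin N → ℚ)
          = q (t0 (q.rangeRestrict (toM x))) := rfl
      have h2 : q (t0 (q.rangeRestrict (toM x))) = (q.rangeRestrict (toM x) : W) :=
        hqt _
      have h3 : (q.rangeRestrict (toM x) : W) = p (x : Fin N → ℚ) := rfl
      rw [hFx, map_sub, h1, h2, h3, sub_self]
    have hV : F (toM x) ∈ V := by
      rw [← hker]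
      exact ⟨LinearMap.mem_ker.2 hpF, hERZsub _ hERZF⟩
    exact (hVZmem _).2 ⟨hV, hERZF⟩
  · intro x hx
    have hxV : (x : Fin N → ℚ) ∈ V := ((hVZmem _).1 hx).1
    have hpx : p (x : Fin N → ℚ) = 0 := by
      rw [← hker] at hxV
      exact hxV.1
    have h0 : q.rangeRestrict (toM x) = 0 := by
      apply Subtype.ext
      rw [show ((q.rangeRestrict (toM x) : W)) = p (x : Fin N → ℚ) from rfl, hpx,
        ZeroMemClass.coe_zero]
    have hFx : F (toM x) = (x : Fin N → ℚ) - (t0 (q.rangeRestrict (toM x)) : Fin N → ℚ) := rfl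
    rw [AddMonoidHom.mk'_apply, hFx, h0, map_zero]
    simp
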